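/- Let n ≥ 1 and fix δ with 0 < δ < π/2. For each i ∈ ℕ let d_i be the diagonal (n+1)×(n+1) matrix with positive diagonal entries μ_i(0), …, μ_i(n), and assume μ_i(0)/max_{1≤j≤n} μ_i(j) → ∞ as i → ∞. Then the sets {x ∈ Sⁿ : d(d_i·x/‖d_i·x‖, e₀) ≤ δ} (the preimages under the projective action of d_i of the closed δ-ball centered at the first standard basis vector e₀) converge in the Hausdorff distance to the closed hemisphere {x ∈ Sⁿ : ⟨x, e₀⟩ ≥ 0}. (The key dynamical step in the proof of Proposition B.1 of the paper: the preimages of a small ball around the attracting fixed point converge to a closed hemisphere.) -/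

import Mathlib

open scoped RealInnerProductSpace

noncomputable section

/-- `Esp n` is `ℝ^{n+1}` with its standard inner product. -/
abbrev Esp (n : ℕ) : Type := EuclideanSpace ℝ (Fin (n + 1))

/-- The unit sphere `Sⁿ ⊆ ℝ^{n+1}`. -/
def sphereSet (n : ℕ) : Set (Esp n) := {x | ‖x‖ = 1}

/-- A convex segment in `Sⁿ`: `{(cos t)·u + (sin t)·v : 0 ≤ t ≤ a}` for an
orthonormal pair `u, v` and some `a ∈ [0, π]`. -/
def IsConvexSegment {n : ℕ} (S : Set (Esp n)) : Prop :=
  ∃ (u v : Esp n) (a : ℝ), ‖u‖ = 1 ∧ ‖v‖ = 1 ∧ ⟪u, v⟫ = 0 ∧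
    0 ≤ a ∧ a ≤ Real.pi ∧
    S = (fun t : ℝ => Real.cos t • u + Real.sin t • v) '' Set.Icc 0 a

/-- A subset of `Sⁿ` is convex if any two of its points are contained in a
convex segment contained in the set. -/
def SphConvex {n : ℕ} (A : Set (Esp n)) : Prop :=
  ∀ x ∈ A, ∀ y ∈ A, ∃ S : Set (Esp n), IsConvexSegment S ∧ S ⊆ A ∧ x ∈ S ∧ y ∈ S

/-- Convergence of a sequence of subsets of `Sⁿ` in the Hausdorff distance. -/
def HConv {n : ℕ} (K : ℕ → Set (Esp n)) (L : Set (Esp n)) : Prop :=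
  Filter.Tendsto (fun i => Metric.hausdorffDist (K i) L) Filter.atTop (nhds 0)

/-- The spherical distance `d(x, y) = arccos ⟨x, y⟩` on `Sⁿ`. -/
def sdist {n : ℕ} (x y : Esp n) : ℝ := Real.arccos ⟪x, y⟫

/-- The vector `(μ 0 * x 0, …, μ n * x n)`: the action of the diagonal matrix
with diagonal entries `μ` on `x`. -/
def diagVec {n : ℕ} (μ : Fin (n + 1) → ℝ) (x : Esp n) : Esp n :=
  (EuclideanSpace.equiv (Fin (n + 1)) ℝ).symm
    (fun j => μ j * EuclideanSpace.equiv (Fin (n + 1)) ℝ x j)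

/-- The projective map of `Sⁿ` induced by the diagonal matrix with diagonal
entries `μ`: `x ↦ d·x / ‖d·x‖`. -/
def diagAct {n : ℕ} (μ : Fin (n + 1) → ℝ) (x : Esp n) : Esp n :=
  ‖diagVec μ x‖⁻¹ • diagVec μ x

/- ### Auxiliary lemmas -/

lemma esp_norm_sq {n : ℕ} (x : Esp n) : ‖x‖ ^ 2 = ∑ j, (x j) ^ 2 := by
  rw [← real_inner_self_eq_norm_sq]
  rw [PiLp.inner_apply]; simp [sq]

lemma inner_e0 {n : ℕ} (x : Esp n) :
    ⟪x, (EuclideanSpace.single 0 1 : Esp n)⟫ = x 0 := by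
  simp [EuclideanSpace.inner_single_right]

lemma diagVec_apply {n : ℕ} (μ : Fin (n + 1) → ℝ) (x : Esp n) (j : Fin (n + 1)) :
    diagVec μ x j = μ j * x j := rfl

lemma arccos_le_arccos' {x y : ℝ} (h : x ≤ y) : Real.arccos y ≤ Real.arccos x := by
  rw [Real.arccos_eq_pi_div_two_sub_arcsin, Real.arccos_eq_pi_div_two_sub_arcsin]
  have := Real.monotone_arcsin h
  linarith

/-- Key membership criterion: a unit vector with large enough first coordinate
is mapped into the `δ`-ball around `e₀`. -/
lemma mem_K_of_coord {n : ℕ} (δ : ℝ) (hδ0 : 0 < δ) (hδ : δ < Real.pi / 2)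
    (μ : Fin (n + 1) → ℝ) (hμ : ∀ j, 0 < μ j) (M : ℝ) (hM0 : 0 ≤ M)
    (hM : ∀ j, j ≠ 0 → μ j ≤ M)
    (x : Esp n) (hx : ‖x‖ = 1)
    (hx0 : M / μ 0 * (Real.cos δ / Real.sin δ) ≤ x 0) (hx0' : 0 < x 0) :
    sdist (diagAct μ x) (EuclideanSpace.single 0 1) ≤ δ := by
  have hpi := Real.pi_pos
  have hcos : 0 < Real.cos δ := Real.cos_pos_of_mem_Ioo ⟨by linarith, hδ⟩
  have hsin : 0 < Real.sin δ := Real.sin_pos_of_pos_of_lt_pi hδ0 (by linarith)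
  have hμ0 := hμ 0
  -- key inequality: cos δ * M ≤ sin δ * (μ 0 * x 0)
  have hkey : Real.cos δ * M ≤ Real.sin δ * (μ 0 * x 0) := by
    rw [div_mul_div_comm, div_le_iff₀ (by positivity)] at hx0
    nlinarith
  -- bound on the squared norm of diagVec μ x
  have hsum : ‖diagVec μ x‖ ^ 2 = ∑ j, (μ j * x j) ^ 2 := by
    rw [esp_norm_sq]
    exact Finset.sum_congr rfl fun j _ => by rw [diagVec_apply]
  have hxsum : ∑ j, (x j) ^ 2 = 1 := by rw [← esp_norm_sq, hx]; norm_num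
  have hN2 : ‖diagVec μ x‖ ^ 2 ≤ (μ 0 * x 0) ^ 2 + M ^ 2 := by
    rw [hsum, Fin.sum_univ_succ]
    have h1 : ∑ j : Fin n, (μ j.succ * x j.succ) ^ 2 ≤
        M ^ 2 * ∑ j : Fin n, (x j.succ) ^ 2 := by
      rw [Finset.mul_sum]
      refine Finset.sum_le_sum fun j _ => ?_
      have h1 := hM j.succ (Fin.succ_ne_zero j)
      have h2 := (hμ j.succ).le
      have h3 : μ j.succ ^ 2 ≤ M ^ 2 := by nlinarith
      rw [mul_pow]
      exact mul_le_mul_of_nonneg_right h3 (sq_nonneg _)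
    have h2 : ∑ j : Fin n, (x j.succ) ^ 2 ≤ 1 := by
      rw [← hxsum, Fin.sum_univ_succ]
      nlinarith [sq_nonneg (x 0)]
    nlinarith [sq_nonneg M]
  -- the norm is positive
  have hNpos : 0 < ‖diagVec μ x‖ := by
    rw [norm_pos_iff]
    intro h
    have : diagVec μ x 0 = 0 := by rw [h]; rfl
    rw [diagVec_apply] at this
    nlinarith
  -- inner product with e0
  have hip : ⟪diagAct μ x, (EuclideanSpace.single 0 1 : Esp n)⟫ =
      ‖diagVec μ x‖⁻¹ * (μ 0 * x 0) := by
    rw [inner_e0]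
    rfl
  -- main inequality
  have hkey2 : (Real.cos δ * M) ^ 2 ≤ (Real.sin δ * (μ 0 * x 0)) ^ 2 :=
    pow_le_pow_left₀ (by positivity) hkey 2
  have hmain2 : (Real.cos δ * ‖diagVec μ x‖) ^ 2 ≤ (μ 0 * x 0) ^ 2 := by
    have hs := Real.sin_sq_add_cos_sq δ
    nlinarith [mul_le_mul_of_nonneg_left hN2 (sq_nonneg (Real.cos δ))]
  have hmain : Real.cos δ * ‖diagVec μ x‖ ≤ μ 0 * x 0 := by
    have h := Real.sqrt_le_sqrt hmain2
    rwa [Real.sqrt_sq (by positivity), Real.sqrt_sq (by positivity)] at h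
  have hge : Real.cos δ ≤ ⟪diagAct μ x, (EuclideanSpace.single 0 1 : Esp n)⟫ := by
    rw [hip, inv_mul_eq_div, le_div_iff₀ hNpos]
    linarith
  calc sdist (diagAct μ x) (EuclideanSpace.single 0 1)
      ≤ Real.arccos (Real.cos δ) := arccos_le_arccos' hge
    _ = δ := Real.arccos_cos hδ0.le (by linarith)

set_option maxHeartbeats 1000000 in
/-- The key dynamical step in Proposition B.1: if the ratio of the first
diagonal entry of `d i` to the maximum of the others tends to infinity, then
the preimages under the projective actions of the `d i` of the closed `δ`-ball
centered at the attracting fixed point `e₀` converge in the Hausdorff distance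
to the closed hemisphere `{x ∈ Sⁿ : ⟨x, e₀⟩ ≥ 0}`. -/
theorem diag_preimage_ball_tendsto_hemisphere (n : ℕ) (hn : 1 ≤ n)
    (δ : ℝ) (hδ0 : 0 < δ) (hδ : δ < Real.pi / 2)
    (μ : ℕ → Fin (n + 1) → ℝ) (hpos : ∀ i j, 0 < μ i j)
    (hratio : Filter.Tendsto
      (fun i => μ i 0 / sSup {r : ℝ | ∃ j : Fin (n + 1), j ≠ 0 ∧ r = μ i j})
      Filter.atTop Filter.atTop) :
    HConv
      (fun i => {x ∈ sphereSet n |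
        sdist (diagAct (μ i) x) (EuclideanSpace.single 0 1) ≤ δ})
      {x ∈ sphereSet n | 0 ≤ ⟪x, EuclideanSpace.single 0 1⟫} := by
  have hpi := Real.pi_pos
  have hcos : 0 < Real.cos δ := Real.cos_pos_of_mem_Ioo ⟨by linarith, hδ⟩
  have hsin : 0 < Real.sin δ := Real.sin_pos_of_pos_of_lt_pi hδ0 (by linarith)
  set M : ℕ → ℝ := fun i => sSup {r : ℝ | ∃ j : Fin (n + 1), j ≠ 0 ∧ r = μ i j} with hMdef
  have hj1 : (⟨1, by omega⟩ : Fin (n + 1)) ≠ 0 := by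
    simp [Fin.ext_iff]
  have hMfin : ∀ i, {r : ℝ | ∃ j : Fin (n + 1), j ≠ 0 ∧ r = μ i j}.Finite := fun i =>
    (Set.finite_range (μ i)).subset (by rintro r ⟨j, _, rfl⟩; exact ⟨j, rfl⟩)
  have hMle : ∀ i, ∀ j, j ≠ 0 → μ i j ≤ M i := fun i j hj =>
    le_csSup (hMfin i).bddAbove ⟨j, hj, rfl⟩
  have hMpos : ∀ i, 0 < M i := fun i =>
    lt_of_lt_of_le (hpos i ⟨1, by omega⟩) (hMle i _ hj1)
  set ε : ℕ → ℝ := fun i => M i / μ i 0 * (Real.cos δ / Real.sin δ) with hεdef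
  have hεpos : ∀ i, 0 < ε i := fun i => by
    have := hMpos i; have := hpos i 0; positivity
  -- ε tends to 0
  have hεlim : Filter.Tendsto ε Filter.atTop (nhds 0) := by
    have h1 : Filter.Tendsto (fun i => M i / μ i 0) Filter.atTop (nhds 0) := by
      have heq : (fun i => M i / μ i 0) = fun i => (μ i 0 / M i)⁻¹ := by
        funext i; rw [inv_div]
      rw [heq]
      exact hratio.inv_tendsto_atTop
    simpa using h1.mul_const (Real.cos δ / Real.sin δ)
  -- the Hausdorff distance bound
  have hbound : ∀ i, ε i ≤ 1 / 2 →
      Metric.hausdorffDist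
        {x ∈ sphereSet n | sdist (diagAct (μ i) x) (EuclideanSpace.single 0 1) ≤ δ}
        {x ∈ sphereSet n | 0 ≤ ⟪x, EuclideanSpace.single 0 1⟫} ≤ 4 * ε i := by
    intro i hhalf
    have hε0 := hεpos i
    apply Metric.hausdorffDist_le_of_mem_dist (by positivity)
    · -- the preimage is contained in the hemisphere
      rintro x ⟨hxS, hxd⟩
      refine ⟨x, ⟨hxS, ?_⟩, by simp; positivity⟩
      rw [inner_e0]
      have hxd' : Real.arccos (⟪diagAct (μ i) x, (EuclideanSpace.single 0 1 : Esp n)⟫)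
          < Real.pi / 2 := lt_of_le_of_lt hxd hδ
      rw [Real.arccos_lt_pi_div_two] at hxd'
      rw [show diagAct (μ i) x = ‖diagVec (μ i) x‖⁻¹ • diagVec (μ i) x from rfl] at hxd'
      have hip : ⟪(‖diagVec (μ i) x‖⁻¹ • diagVec (μ i) x : Esp n),
          (EuclideanSpace.single 0 1 : Esp n)⟫ = ‖diagVec (μ i) x‖⁻¹ * (μ i 0 * x 0) := by
        rw [inner_e0]; rfl
      rw [hip] at hxd'
      have hinv : 0 ≤ ‖diagVec (μ i) x‖⁻¹ := by positivity
      by_contra hneg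
      push_neg at hneg
      have hμ0 := hpos i 0
      nlinarith [mul_nonneg hinv (mul_nonneg hμ0.le (neg_nonneg.mpr hneg.le))]
    · -- every point of the hemisphere is close to the preimage
      rintro y ⟨hyS, hy0⟩
      have hyS' : ‖y‖ = 1 := hyS
      set s : ℝ := 2 * ε i with hs
      have hspos : 0 < s := by positivity
      rw [inner_e0] at hy0
      have hy0le : y 0 ≤ 1 := by
        have h := real_inner_le_norm y (EuclideanSpace.single 0 1 : Esp n)
        rw [inner_e0, hyS'] at h
        simpa using h
      set w : Esp n := y + s • (EuclideanSpace.single 0 1 : Esp n) with hw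
      have hw0 : w 0 = y 0 + s := by
        simp [hw, EuclideanSpace.single_apply]
      have hwnorm : ‖w‖ ^ 2 = 1 + 2 * s * y 0 + s ^ 2 := by
        rw [hw, norm_add_sq_real, real_inner_smul_right, inner_e0, norm_smul, hyS']
        simp [mul_pow, sq_abs]
        ring
      have hN1 : 1 ≤ ‖w‖ := by nlinarith [norm_nonneg w]
      have hNle : ‖w‖ ≤ 1 + s := by nlinarith [norm_nonneg w]
      have hNpos : 0 < ‖w‖ := lt_of_lt_of_le one_pos hN1
      set x : Esp n := ‖w‖⁻¹ • w with hx
      have hxnorm : ‖x‖ = 1 := by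
        rw [hx, norm_smul, Real.norm_eq_abs, abs_inv, abs_of_pos hNpos]
        field_simp
      have hx0 : x 0 = ‖w‖⁻¹ * (y 0 + s) := by
        rw [hx, ← hw0]; rfl
      have hinvle : (1 + s)⁻¹ ≤ ‖w‖⁻¹ := by
        apply inv_anti₀ hNpos hNle
      have hxε : ε i ≤ x 0 := by
        rw [hx0]
        calc ε i ≤ s / (1 + s) := by
              rw [le_div_iff₀ (by positivity)]
              nlinarith
          _ = (1 + s)⁻¹ * s := by rw [div_eq_mul_inv]; ring
          _ ≤ ‖w‖⁻¹ * s := by gcongr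
          _ ≤ ‖w‖⁻¹ * (y 0 + s) := by
              have : 0 ≤ ‖w‖⁻¹ := by positivity
              nlinarith
      have hx0pos : 0 < x 0 := lt_of_lt_of_le hε0 hxε
      refine ⟨x, ⟨hxnorm, ?_⟩, ?_⟩
      · exact mem_K_of_coord δ hδ0 hδ (μ i) (hpos i) (M i) (hMpos i).le
          (hMle i) x hxnorm hxε hx0pos
      · -- dist x y ≤ 4 * ε i
        have hxy : x - y = (‖w‖⁻¹ - 1) • y +
            (‖w‖⁻¹ * s) • (EuclideanSpace.single 0 1 : Esp n) := by
          rw [hx, hw, smul_add, smul_smul, sub_smul, one_smul]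
          abel
        have hinv1 : ‖w‖⁻¹ ≤ 1 := by
          rw [inv_le_one_iff₀]; right; exact hN1
        have hd : dist x y ≤ |‖w‖⁻¹ - 1| * ‖y‖ +
            |‖w‖⁻¹ * s| * ‖(EuclideanSpace.single 0 1 : Esp n)‖ := by
          rw [dist_eq_norm, hxy]
          refine (norm_add_le _ _).trans ?_
          rw [norm_smul, norm_smul, Real.norm_eq_abs, Real.norm_eq_abs]
        have he0norm : ‖(EuclideanSpace.single 0 1 : Esp n)‖ = 1 := by simp
        rw [hyS', he0norm, mul_one, mul_one] at hd
        have habs1 : |‖w‖⁻¹ - 1| = 1 - ‖w‖⁻¹ := by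
          rw [abs_of_nonpos (by linarith)]; ring
        have habs2 : |‖w‖⁻¹ * s| = ‖w‖⁻¹ * s := by
          rw [abs_of_nonneg (by positivity)]
        rw [habs1, habs2] at hd
        have hsub : 1 - ‖w‖⁻¹ ≤ s := by
          have he : (1 + s)⁻¹ * (1 + s) = 1 := inv_mul_cancel₀ (by positivity)
          nlinarith
        have hmul : ‖w‖⁻¹ * s ≤ s := by nlinarith
        rw [dist_comm]
        calc dist x y ≤ (1 - ‖w‖⁻¹) + ‖w‖⁻¹ * s := hd
          _ ≤ s + s := by linarith
          _ = 4 * ε i := by rw [hs]; ring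
  -- conclude by squeezing
  unfold HConv
  have h4ε : Filter.Tendsto (fun i => 4 * ε i) Filter.atTop (nhds 0) := by
    simpa using hεlim.const_mul 4
  refine squeeze_zero'
    (Filter.Eventually.of_forall fun i => Metric.hausdorffDist_nonneg) ?_ h4ε
  have hev : ∀ᶠ i in Filter.atTop, ε i ≤ 1 / 2 :=
    hεlim.eventually (eventually_le_nhds (by norm_num))
  exact hev.mono fun i hi => hbound i hi
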